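/- Let C=(S,P) be a countable Markov chain with finitely branching transitions, T an absorbing target set, L : S⁺ → ℝ≥0 with f_{L,T} B-bounded, and for each depth d let p_succ^(d) (resp. p_fail^(d)) be the total probability of paths of length ≤ d from s₀ that have reached T (resp. Av_C(T)). Then C is decisive w.r.t. T from s₀ if and only if lim_{d→∞} (p_succ^(d) + p_fail^(d)) = 1; and in that case, for every d, the expected reward E(f_{L,T}(ϱ^{C,s₀})) lies in the interval [e_d − B·(1 − p_succ^(d) − p_fail^(d)), e_d + B·(1 − p_succ^(d) − p_fail^(d))], where e_d = ∑ L(ρ)·Pr(ρ) over paths ρ of length ≤ d from s₀ reaching T at their last state for the first time. -/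

import Mathlib

open scoped ENNReal NNReal BigOperators
open Filter

noncomputable section

variable {S : Type*}

/-- Probability of following a finite path (list of successive states). -/
def pathProb (P : S → S → ℝ≥0∞) : List S → ℝ≥0∞
  | [] => 1
  | [_] => 1
  | a :: b :: l => P a b * pathProb P (b :: l)

/-- `l` is a finite path starting at `s` that visits `T` for the first time
at its last element. -/
def FirstHitPath (T : Set S) (s : S) (l : List S) : Prop :=
  l.head? = some s ∧ ∃ h : l ≠ [], l.getLast h ∈ T ∧
    ∀ i : Fin l.length, (i : ℕ) + 1 < l.length → l.get i ∉ T

/-- Probability of eventually reaching `T` from `s`. -/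
def reachProb (P : S → S → ℝ≥0∞) (T : Set S) (s : S) : ℝ≥0∞ :=
  ∑' l : {l : List S // FirstHitPath T s l}, pathProb P (l : List S)

/-- The avoid set: states from which `T` is unreachable. -/
def Av (P : S → S → ℝ≥0∞) (T : Set S) : Set S := {s | reachProb P T s = 0}

/-- Probability that, starting from `s`, the chain stays outside `R`
during its first `n` steps (i.e. the hitting time of `R` is `> n`). -/
def surviveProb (P : S → S → ℝ≥0∞) (R : Set S) (s : S) (n : ℕ) : ℝ≥0∞ :=
  ∑' l : {l : List S // l.length = n + 1 ∧ l.head? = some s ∧ ∀ x ∈ l, x ∉ R},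
    pathProb P (l : List S)

/-- Expected hitting time of `R` from `s`, via `E τ = ∑_{n≥0} Pr(τ > n)`. -/
def expHittingTime (P : S → S → ℝ≥0∞) (R : Set S) (s : S) : ℝ≥0∞ :=
  ∑' n : ℕ, surviveProb P R s n

/-- Probability that `X_i ∈ A` for all `i ≥ m`, starting from `s`
(as the infimum over finite horizons). -/
def confineProb (P : S → S → ℝ≥0∞) (A : Set S) (s : S) (m : ℕ) : ℝ≥0∞ :=
  ⨅ n : ℕ, ∑' l : {l : List S // l.length = n + 1 ∧ l.head? = some s ∧
      ∀ i : Fin l.length, m ≤ (i : ℕ) → l.get i ∈ A}, pathProb P (l : List S)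

/-- Expected reward collected at the first visit of `T`. -/
def expReward (P : S → S → ℝ≥0∞) (L : List S → ℝ≥0∞) (T : Set S) (s : S) : ℝ≥0∞ :=
  ∑' l : {l : List S // FirstHitPath T s l}, L l * pathProb P (l : List S)

/-- `P` is a stochastic matrix. -/
def IsStochastic (P : S → S → ℝ≥0∞) : Prop := ∀ s, ∑' s', P s s' = 1

/-- States of the biased chain other than `s₋`. -/
abbrev SA (P : S → S → ℝ≥0∞) (F : Set S) := {s : S // s ∉ Av P F}

/-- `P'` (on `(S ∖ Av(F)) ⊎ {s₋}`, with `none = s₋`) is a biased Markov chain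
of `(C, T, F)`. -/
def IsBiased (P : S → S → ℝ≥0∞) (T F : Set S)
    (P' : Option (SA P F) → Option (SA P F) → ℝ≥0∞) : Prop :=
  IsStochastic P' ∧
  P' none none = 1 ∧
  (∀ s : SA P F, s.val ∈ T → P' (some s) (some s) = 1) ∧
  (∀ s s' : SA P F, 0 < P s.val s'.val → 0 < P' (some s) (some s'))

/-- `(C^•, F^•)` together with `α` is an abstraction of `(C, F)`. -/
def IsAbstraction (P : S → S → ℝ≥0∞) (F : Set S)
    {S' : Type*} (P' : S' → S' → ℝ≥0∞) (F' : Set S')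
    (α : SA P F → S') : Prop :=
  (∀ s : SA P F, s.val ∈ F → α s ∈ F') ∧
  (∀ s : SA P F, s.val ∉ F →
    ∑' s' : SA P F, P s.val s'.val * reachProb P' F' (α s')
      ≤ reachProb P' F' (α s))

/-- The decreasing ratio `h(s)` of an abstraction. -/
def hRatio (P : S → S → ℝ≥0∞) (F : Set S)
    {S' : Type*} (P' : S' → S' → ℝ≥0∞) (F' : Set S')
    (α : SA P F → S') (s : SA P F) : ℝ≥0∞ :=
  (∑' s' : SA P F, P s.val s'.val * reachProb P' F' (α s'))
    / reachProb P' F' (α s)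

/-- The biased Markov chain constructed from an abstraction. -/
def biasedKernel (P : S → S → ℝ≥0∞) (F : Set S)
    {S' : Type*} (P' : S' → S' → ℝ≥0∞) (F' : Set S')
    (α : SA P F → S') :
    Option (SA P F) → Option (SA P F) → ℝ≥0∞
  | none, none => 1
  | none, some _ => 0
  | some s, none => 1 - hRatio P F P' F' α s
  | some s, some s' =>
      P s.val s'.val * reachProb P' F' (α s') / reachProb P' F' (α s)

/-- The random walk `W^p` on `ℕ`: `0` absorbing, up with probability `p`,
down with probability `1 - p`. -/
def walkKernel (p : ℝ≥0∞) : ℕ → ℕ → ℝ≥0∞ := fun m n =>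
  if m = 0 then (if n = 0 then 1 else 0)
  else if n = m + 1 then p
  else if n + 1 = m then 1 - p
  else 0

/-- `(C, λ)` is a layered Markov chain. -/
def IsLMC (P : S → S → ℝ≥0∞) (lam : S → ℕ) : Prop :=
  (∀ s s', 0 < P s s' → (lam s : ℤ) ≤ (lam s' : ℤ) + 1) ∧
  (∀ n : ℕ, {s : S | lam s = n}.Finite)

/-- Total probability of increasing the level. -/
def Pup (P : S → S → ℝ≥0∞) (lam : S → ℕ) (s : S) : ℝ≥0∞ :=
  ∑' s' : {s' : S // lam s < lam s'}, P s s'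

/-- Total probability of decreasing the level (by one). -/
def Pdown (P : S → S → ℝ≥0∞) (lam : S → ℕ) (s : S) : ℝ≥0∞ :=
  ∑' s' : {s' : S // lam s' + 1 = lam s}, P s s'

/-- Total probability of keeping the same level. -/
def Peq (P : S → S → ℝ≥0∞) (lam : S → ℕ) (s : S) : ℝ≥0∞ :=
  ∑' s' : {s' : S // lam s' = lam s}, P s s'

/-- `(C, λ)` is `(p⁺, N₀)`-divergent. -/
def Divergent (P : S → S → ℝ≥0∞) (lam : S → ℕ) (pplus : ℝ≥0∞) (N₀ : ℕ) : Prop :=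
  1/2 < pplus ∧ ∀ s : S, N₀ < lam s → Peq P lam s < 1 →
    pplus ≤ Pup P lam s / (Pdown P lam s + Pup P lam s)

end

section Helpers

variable {S : Type*}

lemma pathProb_cons_zero (P : S → S → ℝ≥0∞) {l : List S} (h : pathProb P l = 0) (a : S) :
    pathProb P (a :: l) = 0 := by
  cases l with
  | nil => simp [pathProb] at h
  | cons b t => rw [show pathProb P (a :: b :: t) = P a b * pathProb P (b :: t) from rfl, h, mul_zero]

lemma pathProb_suffix_zero (P : S → S → ℝ≥0∞) {l₁ l₂ : List S} (h : l₂ <:+ l₁)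
    (h0 : pathProb P l₂ = 0) : pathProb P l₁ = 0 := by
  obtain ⟨t, rfl⟩ := h
  induction t with
  | nil => exact h0
  | cons a t ih => exact pathProb_cons_zero P ih a

lemma pathProb_zero_of_step (P : S → S → ℝ≥0∞) {l : List S} {i : ℕ} (hi : i + 1 < l.length)
    (h0 : P l[i] l[i+1] = 0) : pathProb P l = 0 := by
  apply pathProb_suffix_zero P (List.drop_suffix i l)
  have e : l.drop i = l[i] :: l[i+1] :: l.drop (i+2) := by
    rw [List.drop_eq_getElem_cons (by omega), List.drop_eq_getElem_cons (by omega)]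
  rw [e, show pathProb P (l[i] :: l[i+1] :: l.drop (i+2))
      = P l[i] l[i+1] * pathProb P (l[i+1] :: l.drop (i+2)) from rfl, h0, zero_mul]

lemma singleton_firstHit {T : Set S} {s : S} (hs : s ∈ T) : FirstHitPath T s [s] := by
  refine ⟨rfl, List.cons_ne_nil s [], by simpa using hs, ?_⟩
  intro i hi
  simp at hi

lemma not_mem_Av_of_mem_T (P : S → S → ℝ≥0∞) (T : Set S) {s : S} (hs : s ∈ T) :
    s ∉ Av P T := by
  intro h
  have h1 : (1 : ℝ≥0∞) ≤ reachProb P T s := by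
    have := ENNReal.le_tsum (f := fun l : {l : List S // FirstHitPath T s l} =>
      pathProb P (l : List S)) ⟨[s], singleton_firstHit hs⟩
    show (1 : ℝ≥0∞) ≤ ∑' l : {l : List S // FirstHitPath T s l}, pathProb P (l : List S)
    simpa [pathProb] using this
  have h0 : reachProb P T s = 0 := h
  rw [h0] at h1
  simp at h1

lemma pathProb_zero_of_av (P : S → S → ℝ≥0∞) (T : Set S) {s₀ : S} {l : List S}
    (hl : FirstHitPath T s₀ l) {i : ℕ} (hi : i < l.length) (hav : l[i] ∈ Av P T) :
    pathProb P l = 0 := by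
  obtain ⟨hhead, hne, hlast, hint⟩ := hl
  have hdne : l.drop i ≠ [] := by
    apply List.ne_nil_of_length_pos
    simp [List.length_drop]
    omega
  have fh : FirstHitPath T l[i] (l.drop i) := by
    refine ⟨?_, hdne, ?_, ?_⟩
    · rw [List.head?_drop, List.getElem?_eq_getElem hi]
    · rw [List.getLast_eq_getElem, List.getElem_drop]
      rw [List.getLast_eq_getElem] at hlast
      convert hlast using 2
      simp [List.length_drop]
      omega
    · intro j hj
      rw [List.get_eq_getElem, List.getElem_drop]
      have hj' : i + (j : ℕ) + 1 < l.length := by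
        have := j.2
        simp [List.length_drop] at hj ⊢
        omega
      have := hint ⟨i + (j : ℕ), by omega⟩ (by simpa using hj')
      simpa using this
  have hle : pathProb P (l.drop i) ≤ reachProb P T l[i] :=
    ENNReal.le_tsum (f := fun l' : {l' : List S // FirstHitPath T l[i] l'} =>
      pathProb P (l' : List S)) ⟨l.drop i, fh⟩
  have h0 : reachProb P T l[i] = 0 := hav
  rw [h0, le_zero_iff] at hle
  exact pathProb_suffix_zero P (List.drop_suffix i l) hle

lemma leave_T_zero (P : S → S → ℝ≥0∞) (hP : IsStochastic P) (T : Set S)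
    (habsT : ∀ s ∈ T, P s s = 1) {s s' : S} (hs : s ∈ T) (hne : s' ≠ s) : P s s' = 0 := by
  classical
  by_contra h
  have hsum : P s s + P s s' ≤ ∑' x, P s x := by
    have := ENNReal.sum_le_tsum (f := P s) ({s, s'} : Finset S)
    rwa [Finset.sum_pair (fun hss => hne hss.symm)] at this
  rw [hP s, habsT s hs] at hsum
  have : (1 : ℝ≥0∞) < 1 + P s s' := ENNReal.lt_add_right ENNReal.one_ne_top h
  exact absurd (this.trans_le hsum) (lt_irrefl _)

lemma pathProb_zero_of_T_interior (P : S → S → ℝ≥0∞) (hP : IsStochastic P) (T : Set S)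
    (habsT : ∀ s ∈ T, P s s = 1) {s₀ : S} {l : List S}
    (hl : FirstHitPath (Av P T) s₀ l) {i : ℕ} (hi : i + 1 < l.length) (hT : l[i] ∈ T) :
    pathProb P l = 0 := by
  obtain ⟨hhead, hne, hlast, hint⟩ := hl
  suffices H : ∀ k i (hi1 : i + 1 < l.length), l.length - i ≤ k → l[i] ∈ T → pathProb P l = 0 by
    exact H l.length i hi (by omega) hT
  intro k
  induction k with
  | zero => intro i hi1 hk _; omega
  | succ k ih =>
    intro i hi1 hk hTi
    by_cases hEq : l[i+1] = l[i]
    · by_cases h2 : i + 2 < l.length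
      · exact ih (i+1) h2 (by omega) (by rw [hEq]; exact hTi)
      · exfalso
        have hTi1 : l[i+1] ∈ T := by rw [hEq]; exact hTi
        have hlast' : l[i+1] ∈ Av P T := by
          rw [List.getLast_eq_getElem] at hlast
          convert hlast using 2
          omega
        exact not_mem_Av_of_mem_T P T hTi1 hlast'
    · exact pathProb_zero_of_step P hi1 (leave_T_zero P hP T habsT hTi hEq)

lemma tsum_setOf_congr {α : Type*} {p q : α → Prop} (f : α → ℝ≥0∞)
    (hqp : ∀ a, q a → p a) (hpq : ∀ a, p a → ¬ q a → f a = 0) :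
    ∑' a : {a // p a}, f (a : α) = ∑' a : {a // q a}, f (a : α) := by
  have h1 : ∑' a : {a // p a}, f (a : α) = ∑' x, Set.indicator {a | p a} f x :=
    tsum_subtype {a | p a} f
  have h2 : ∑' a : {a // q a}, f (a : α) = ∑' x, Set.indicator {a | q a} f x :=
    tsum_subtype {a | q a} f
  rw [h1, h2]
  apply tsum_congr
  intro a
  by_cases hq : q a
  · simp [Set.indicator, hq, hqp a hq]
  · by_cases hp : p a
    · simp [Set.indicator, hp, hq, hpq a hp hq]
    · simp [Set.indicator, hp, hq]

lemma tsum_setOf_mono {α : Type*} {p q : α → Prop} (f : α → ℝ≥0∞)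
    (hpq : ∀ a, p a → q a) :
    ∑' a : {a // p a}, f (a : α) ≤ ∑' a : {a // q a}, f (a : α) := by
  have h1 : ∑' a : {a // p a}, f (a : α) = ∑' x, Set.indicator {a | p a} f x :=
    tsum_subtype {a | p a} f
  have h2 : ∑' a : {a // q a}, f (a : α) = ∑' x, Set.indicator {a | q a} f x :=
    tsum_subtype {a | q a} f
  rw [h1, h2]
  apply ENNReal.tsum_le_tsum
  intro a
  exact Set.indicator_le_indicator_of_subset (fun a ha => hpq a ha) (fun _ => by simp) a

lemma tsum_length_mono (V : Set (List S)) (f : List S → ℝ≥0∞) :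
    Monotone (fun d : ℕ => ∑' l : {l : List S // l ∈ V ∧ l.length ≤ d + 1}, f (l : List S)) := by
  intro d₁ d₂ h
  exact tsum_setOf_mono f (fun l hl => ⟨hl.1, hl.2.trans (by omega)⟩)

lemma iSup_tsum_length (V : Set (List S)) (f : List S → ℝ≥0∞) :
    ⨆ d : ℕ, ∑' l : {l : List S // l ∈ V ∧ l.length ≤ d + 1}, f (l : List S)
      = ∑' l : V, f (l : List S) := by
  apply le_antisymm
  · exact iSup_le fun d => tsum_setOf_mono f (fun l hl => hl.1)
  · rw [tsum_subtype V f, ENNReal.tsum_eq_iSup_sum]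
    apply iSup_le
    intro s
    refine le_iSup_of_le (s.sup List.length) ?_
    calc ∑ l ∈ s, V.indicator f l
        ≤ ∑ l ∈ s, Set.indicator {l : List S | l ∈ V ∧ l.length ≤ s.sup List.length + 1} f l := by
          apply Finset.sum_le_sum
          intro l hls
          by_cases hV : l ∈ V
          · have hlen : l.length ≤ s.sup List.length := Finset.le_sup (f := List.length) hls
            have h2 : l.length ≤ s.sup List.length + 1 := by omega
            simp [Set.indicator, hV, h2]
          · simp [Set.indicator, hV]
      _ ≤ ∑' l : List S, Set.indicator {l : List S | l ∈ V ∧ l.length ≤ s.sup List.length + 1} f l :=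
          ENNReal.sum_le_tsum s
      _ = ∑' l : {l : List S // l ∈ V ∧ l.length ≤ s.sup List.length + 1}, f (l : List S) :=
          (tsum_subtype _ f).symm

end Helpers
section Helpers2

variable {S : Type*}

lemma tsum_or_disjoint {α : Type*} {p q : α → Prop} (f : α → ℝ≥0∞)
    (h : ∀ a, p a → q a → False) :
    (∑' a : {a // p a}, f (a : α)) + ∑' a : {a // q a}, f (a : α)
      = ∑' a : {a // p a ∨ q a}, f (a : α) := by
  classical
  have h1 : ∑' a : {a // p a}, f (a : α) = ∑' x, Set.indicator {a | p a} f x :=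
    tsum_subtype {a | p a} f
  have h2 : ∑' a : {a // q a}, f (a : α) = ∑' x, Set.indicator {a | q a} f x :=
    tsum_subtype {a | q a} f
  have h3 : ∑' a : {a // p a ∨ q a}, f (a : α)
      = ∑' x, Set.indicator {a | p a ∨ q a} f x := tsum_subtype {a | p a ∨ q a} f
  rw [h1, h2, h3, ← ENNReal.tsum_add]
  apply tsum_congr
  intro a
  by_cases hp : p a
  · have hq : ¬ q a := fun hq => h a hp hq
    simp [Set.indicator, hp, hq]
  · by_cases hq : q a <;> simp [Set.indicator, hp, hq]

lemma tsum_setOf_iff {α : Type*} {p q : α → Prop} (f : α → ℝ≥0∞) (h : ∀ a, p a ↔ q a) :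
    ∑' a : {a // p a}, f (a : α) = ∑' a : {a // q a}, f (a : α) :=
  tsum_setOf_congr f (fun a ha => (h a).mpr ha) (fun a hp hq => absurd ((h a).mp hp) hq)

/-- auxiliary predicate: first-hit path of `T` avoiding `Av P T` in its interior. -/
def auxA (P : S → S → ℝ≥0∞) (T : Set S) (s₀ : S) (l : List S) : Prop :=
  FirstHitPath T s₀ l ∧ ∀ i : Fin l.length, (i : ℕ) + 1 < l.length → l.get i ∉ Av P T

/-- auxiliary predicate: first-hit path of `Av P T` avoiding `T` in its interior. -/
def auxB (P : S → S → ℝ≥0∞) (T : Set S) (s₀ : S) (l : List S) : Prop :=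
  FirstHitPath (Av P T) s₀ l ∧ ∀ i : Fin l.length, (i : ℕ) + 1 < l.length → l.get i ∉ T

end Helpers2
open scoped Classical

section Thms

variable {S : Type*}

theorem stmt17 [Countable S] (P : S → S → ℝ≥0∞) (hP : IsStochastic P)
    (hfb : ∀ s : S, {s' : S | 0 < P s s'}.Finite)
    (T : Set S) (habsT : ∀ s ∈ T, P s s = 1) (s₀ : S)
    (L : List S → ℝ≥0∞) (B : ℝ≥0∞)
    (hbdd : ∀ (s : S) (l : List S), FirstHitPath T s l → L l ≤ B) :
    let psucc : ℕ → ℝ≥0∞ := fun d =>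
      ∑' l : {l : List S // FirstHitPath T s₀ l ∧ l.length ≤ d + 1},
        pathProb P (l : List S)
    let pfail : ℕ → ℝ≥0∞ := fun d =>
      ∑' l : {l : List S // FirstHitPath (Av P T) s₀ l ∧ l.length ≤ d + 1},
        pathProb P (l : List S)
    let e : ℕ → ℝ≥0∞ := fun d =>
      ∑' l : {l : List S // FirstHitPath T s₀ l ∧ l.length ≤ d + 1},
        L l * pathProb P (l : List S)
    (reachProb P (T ∪ Av P T) s₀ = 1 ↔
      Filter.Tendsto (fun d => psucc d + pfail d) Filter.atTop (nhds 1)) ∧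
    (reachProb P (T ∪ Av P T) s₀ = 1 →
      ∀ d : ℕ,
        e d - B * (1 - (psucc d + pfail d)) ≤ expReward P L T s₀ ∧
        expReward P L T s₀ ≤ e d + B * (1 - (psucc d + pfail d))) := by
  intro psucc pfail e
  classical
  have hAz : ∀ l : List S, FirstHitPath T s₀ l → ¬ auxA P T s₀ l → pathProb P l = 0 := by
    intro l hA hA'
    have hex : ∃ i : Fin l.length, (i : ℕ) + 1 < l.length ∧ l.get i ∈ Av P T := by
      by_contra hc
      push_neg at hc
      exact hA' ⟨hA, hc⟩
    obtain ⟨i, hi, hAv⟩ := hex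
    rw [List.get_eq_getElem] at hAv
    exact pathProb_zero_of_av P T hA i.2 hAv
  have hBz : ∀ l : List S, FirstHitPath (Av P T) s₀ l → ¬ auxB P T s₀ l →
      pathProb P l = 0 := by
    intro l hB hB'
    have hex : ∃ i : Fin l.length, (i : ℕ) + 1 < l.length ∧ l.get i ∈ T := by
      by_contra hc
      push_neg at hc
      exact hB' ⟨hB, hc⟩
    obtain ⟨i, hi, hT⟩ := hex
    rw [List.get_eq_getElem] at hT
    exact pathProb_zero_of_T_interior P hP T habsT hB hi hT
  have hU : ∀ l : List S,
      FirstHitPath (T ∪ Av P T) s₀ l ↔ (auxA P T s₀ l ∨ auxB P T s₀ l) := by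
    intro l
    constructor
    · rintro ⟨hh, hne, hlast, hint⟩
      rcases hlast with hlT | hlA
      · exact Or.inl ⟨⟨hh, hne, hlT, fun i hi hm => hint i hi (Or.inl hm)⟩,
          fun i hi hm => hint i hi (Or.inr hm)⟩
      · exact Or.inr ⟨⟨hh, hne, hlA, fun i hi hm => hint i hi (Or.inr hm)⟩,
          fun i hi hm => hint i hi (Or.inl hm)⟩
    · rintro (⟨⟨hh, hne, hlT, hiT⟩, hiA⟩ | ⟨⟨hh, hne, hlA, hiA⟩, hiT⟩)
      · exact ⟨hh, hne, Or.inl hlT, fun i hi hm => hm.elim (hiT i hi) (hiA i hi)⟩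
      · exact ⟨hh, hne, Or.inr hlA, fun i hi hm => hm.elim (hiT i hi) (hiA i hi)⟩
  have hdisj : ∀ l : List S, auxA P T s₀ l → auxB P T s₀ l → False := by
    rintro l ⟨⟨_, hne, hlT, _⟩, _⟩ ⟨⟨_, hne', hlA, _⟩, _⟩
    exact not_mem_Av_of_mem_T P T hlT hlA
  have hQs : ∀ d : ℕ, psucc d + pfail d
      = ∑' l : {l : List S // FirstHitPath (T ∪ Av P T) s₀ l ∧ l.length ≤ d + 1},
          pathProb P (l : List S) := by
    intro d
    have h1 : psucc d = ∑' l : {l : List S // auxA P T s₀ l ∧ l.length ≤ d + 1},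
        pathProb P (l : List S) :=
      tsum_setOf_congr _ (fun l hl => ⟨hl.1.1, hl.2⟩)
        (fun l hl hnl => hAz l hl.1 (fun h => hnl ⟨h, hl.2⟩))
    have h2 : pfail d = ∑' l : {l : List S // auxB P T s₀ l ∧ l.length ≤ d + 1},
        pathProb P (l : List S) :=
      tsum_setOf_congr _ (fun l hl => ⟨hl.1.1, hl.2⟩)
        (fun l hl hnl => hBz l hl.1 (fun h => hnl ⟨h, hl.2⟩))
    rw [h1, h2, tsum_or_disjoint _ (fun l ha hb => hdisj l ha.1 hb.1)]
    refine tsum_setOf_iff _ (fun l => ?_)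
    rw [hU l, or_and_right]
  have hmono : Monotone (fun d : ℕ =>
      ∑' l : {l : List S // FirstHitPath (T ∪ Av P T) s₀ l ∧ l.length ≤ d + 1},
        pathProb P (l : List S)) :=
    tsum_length_mono {l : List S | FirstHitPath (T ∪ Av P T) s₀ l} (pathProb P)
  have hsup : (⨆ d : ℕ,
      ∑' l : {l : List S // FirstHitPath (T ∪ Av P T) s₀ l ∧ l.length ≤ d + 1},
        pathProb P (l : List S)) = reachProb P (T ∪ Av P T) s₀ :=
    iSup_tsum_length {l : List S | FirstHitPath (T ∪ Av P T) s₀ l} (pathProb P)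
  have hQeq : (fun d : ℕ => psucc d + pfail d) = (fun d : ℕ =>
      ∑' l : {l : List S // FirstHitPath (T ∪ Av P T) s₀ l ∧ l.length ≤ d + 1},
        pathProb P (l : List S)) := funext hQs
  constructor
  · constructor
    · intro hr
      rw [hQeq]
      have ht := tendsto_atTop_iSup hmono
      rwa [hsup, hr] at ht
    · intro ht
      rw [hQeq] at ht
      have h2 := tendsto_atTop_iSup hmono
      have h3 := tendsto_nhds_unique h2 ht
      rw [← hsup]
      exact h3
  · intro hr d
    have hsp : (∑' l : {l : List S // FirstHitPath T s₀ l}, L l * pathProb P (l : List S))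
        = (∑' l : {l : List S // FirstHitPath T s₀ l ∧ l.length ≤ d + 1},
            L l * pathProb P (l : List S))
          + ∑' l : {l : List S // FirstHitPath T s₀ l ∧ ¬ l.length ≤ d + 1},
            L l * pathProb P (l : List S) := by
      rw [tsum_or_disjoint (fun l => L l * pathProb P l) (fun l h1 h2 => h2.2 h1.2)]
      refine tsum_setOf_iff (fun l => L l * pathProb P l) (fun l => ?_)
      constructor
      · intro h
        by_cases hl : l.length ≤ d + 1
        exacts [Or.inl ⟨h, hl⟩, Or.inr ⟨h, hl⟩]
      · rintro (⟨h, _⟩ | ⟨h, _⟩) <;> exact h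
    constructor
    · calc e d - B * (1 - (psucc d + pfail d)) ≤ e d := tsub_le_self
        _ ≤ expReward P L T s₀ :=
          tsum_setOf_mono (fun l => L l * pathProb P l) (fun l hl => hl.1)
    · have htail1 : (∑' l : {l : List S // FirstHitPath T s₀ l ∧ ¬ l.length ≤ d + 1},
          L l * pathProb P (l : List S))
          ≤ B * ∑' l : {l : List S // FirstHitPath T s₀ l ∧ ¬ l.length ≤ d + 1},
              pathProb P (l : List S) := by
        rw [← ENNReal.tsum_mul_left]
        exact ENNReal.tsum_le_tsum (fun l => mul_le_mul_left (hbdd s₀ l l.2.1) _)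
      have htail2 : (∑' l : {l : List S // FirstHitPath T s₀ l ∧ ¬ l.length ≤ d + 1},
          pathProb P (l : List S)) ≤ 1 - (psucc d + pfail d) := by
        have hb1 : psucc d + pfail d ≤ 1 := by
          rw [hQs d]
          calc (∑' l : {l : List S //
              FirstHitPath (T ∪ Av P T) s₀ l ∧ l.length ≤ d + 1}, pathProb P (l : List S))
              ≤ ∑' l : {l : List S // FirstHitPath (T ∪ Av P T) s₀ l},
                  pathProb P (l : List S) := tsum_setOf_mono _ (fun l hl => hl.1)
            _ = 1 := hr
        apply ENNReal.le_sub_of_add_le_left (ne_top_of_le_ne_top ENNReal.one_ne_top hb1)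
        rw [hQs d]
        have e1 : (∑' l : {l : List S // FirstHitPath T s₀ l ∧ ¬ l.length ≤ d + 1},
            pathProb P (l : List S))
            = ∑' l : {l : List S // auxA P T s₀ l ∧ ¬ l.length ≤ d + 1},
                pathProb P (l : List S) :=
          tsum_setOf_congr _ (fun l hl => ⟨hl.1.1, hl.2⟩)
            (fun l hl hnl => hAz l hl.1 (fun h => hnl ⟨h, hl.2⟩))
        rw [e1, tsum_or_disjoint _ (fun l h1 h2 => h2.2 h1.2)]
        calc (∑' l : {l : List S //
            (FirstHitPath (T ∪ Av P T) s₀ l ∧ l.length ≤ d + 1) ∨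
              (auxA P T s₀ l ∧ ¬ l.length ≤ d + 1)}, pathProb P (l : List S))
            ≤ ∑' l : {l : List S // FirstHitPath (T ∪ Av P T) s₀ l}, pathProb P (l : List S) :=
              tsum_setOf_mono _ (fun l hl =>
                hl.elim (fun h => h.1) (fun h => (hU l).mpr (Or.inl h.1)))
          _ = 1 := hr
      calc expReward P L T s₀
          = e d + ∑' l : {l : List S // FirstHitPath T s₀ l ∧ ¬ l.length ≤ d + 1},
              L l * pathProb P (l : List S) := hsp
        _ ≤ e d + B * (1 - (psucc d + pfail d)) :=
          add_le_add_right (htail1.trans (mul_le_mul_right htail2 B)) _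

end Thms
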